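/- arXiv:1704.04606 — 3 statements merged into one kernel-verified Lean document; each statement's English description precedes it below -/
import Mathlib

section
/- Let r ≥ 1 be an integer, z ∈ ℝ_{>0}, v = (v_1, …, v_r) ∈ ℝ_{>0}^r, and s ∈ ℂ with Re(s) > r. Then Barnes' multiple zeta series converges absolutely; i.e., the family ((z + m_1 v_1 + … + m_r v_r)^{−s})_{m ∈ (ℤ_{≥0})^r} is summable in norm. -/
lemma summable_pi_prod : ∀ (r : ℕ) (f : Fin r → ℕ → ℝ), (∀ i n, 0 ≤ f i n) →
    (∀ i, Summable (f i)) → Summable (fun m : Fin r → ℕ => ∏ i, f i (m i)) := by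
  intro r
  induction r with
  | zero => intro f _ _; exact Summable.of_finite
  | succ n ih =>
    intro f h0 hs
    have h2 := (hs 0).mul_of_nonneg (ih (fun i => f i.succ) (fun i k => h0 i.succ k)
      (fun i => hs i.succ)) (fun k => h0 0 k)
      (fun p => Finset.prod_nonneg fun i _ => h0 i.succ (p i))
    have h3 := h2.comp_injective (Fin.consEquiv fun _ : Fin (n + 1) => ℕ).symm.injective
    refine h3.congr fun m => ?_
    simp [Fin.consEquiv, Fin.prod_univ_succ, Fin.tail]

/-- Barnes' multiple zeta series
`ζ(s, v, z) = ∑_{m ∈ ℤ_{≥0}^r} (z + m·v)^{-s}` (with `w^{-s} := exp(-s log w)`)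
converges absolutely for `Re s > r`. -/
theorem barnes_zeta_summable (r : ℕ) (hr : 1 ≤ r) (z : ℝ) (hz : 0 < z)
    (v : Fin r → ℝ) (hv : ∀ i, 0 < v i) (s : ℂ) (hs : (r : ℝ) < s.re) :
    Summable (fun m : Fin r → ℕ =>
      ‖Complex.exp (-s * (Real.log (z + ∑ i, (m i : ℝ) * v i) : ℂ))‖) := by
  set σ := s.re with hσ
  have hr0 : (0 : ℝ) < r := by exact_mod_cast hr
  have hσ0 : 0 < σ := lt_trans hr0 hs
  have ht : 1 < σ / r := (one_lt_div hr0).mpr hs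
  have ht0 : 0 < σ / r := lt_trans one_pos ht
  have hW : ∀ m : Fin r → ℕ, 0 < z + ∑ i, (m i : ℝ) * v i := fun m =>
    add_pos_of_pos_of_nonneg hz (Finset.sum_nonneg fun i _ =>
      mul_nonneg (Nat.cast_nonneg _) (hv i).le)
  have hnorm : ∀ m : Fin r → ℕ,
      ‖Complex.exp (-s * (Real.log (z + ∑ i, (m i : ℝ) * v i) : ℂ))‖
        = (z + ∑ i, (m i : ℝ) * v i) ^ (-σ) := by
    intro m
    rw [Complex.norm_exp, Real.rpow_def_of_pos (hW m)]
    congr 1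
    simp [hσ, mul_comm]
  have hai : ∀ (m : Fin r → ℕ) (i : Fin r), 0 < z / r + (m i : ℝ) * v i := fun m i =>
    add_pos_of_pos_of_nonneg (div_pos hz hr0)
      (mul_nonneg (Nat.cast_nonneg _) (hv i).le)
  -- the dominating function is summable
  have hg : Summable (fun m : Fin r → ℕ =>
      ∏ i, (z / r + (m i : ℝ) * v i) ^ (-(σ / r))) := by
    refine summable_pi_prod r (fun i n => (z / r + (n : ℝ) * v i) ^ (-(σ / r)))
      (fun i n => Real.rpow_nonneg
        (add_pos_of_pos_of_nonneg (div_pos hz hr0)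
          (mul_nonneg (Nat.cast_nonneg _) (hv i).le)).le _) (fun i => ?_)
    have hb := hv i
    have hsum := ((Real.summable_one_div_nat_add_rpow (z / r / v i) (σ / r)).mpr ht).mul_left
      ((v i) ^ (-(σ / r)))
    refine hsum.congr fun n => ?_
    show v i ^ (-(σ / (r:ℝ))) * (1 / |(n:ℝ) + z / r / v i| ^ (σ / r))
      = (z / r + (n:ℝ) * v i) ^ (-(σ / r))
    have hx : (0 : ℝ) < (n : ℝ) + z / r / v i := by positivity
    have hfac : z / r + (n : ℝ) * v i = v i * ((n : ℝ) + z / r / v i) := by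
      field_simp; ring
    rw [hfac, Real.mul_rpow hb.le hx.le, Real.rpow_neg hx.le, abs_of_pos hx, one_div]
  -- comparison
  refine hg.of_nonneg_of_le (fun m => norm_nonneg _) (fun m => ?_)
  rw [hnorm m]
  have hsum_eq : z + ∑ i, (m i : ℝ) * v i = ∑ i, (z / r + (m i : ℝ) * v i) := by
    rw [Finset.sum_add_distrib, Finset.sum_const, Finset.card_univ, Fintype.card_fin,
      nsmul_eq_mul]
    field_simp
  -- AM-GM
  have hamgm : ∏ i, (z / r + (m i : ℝ) * v i) ^ ((1 : ℝ) / r)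
      ≤ z + ∑ i, (m i : ℝ) * v i := by
    rw [hsum_eq]
    calc ∏ i, (z / r + (m i : ℝ) * v i) ^ ((1 : ℝ) / r)
        ≤ ∑ i, (1 : ℝ) / r * (z / r + (m i : ℝ) * v i) :=
          Real.geom_mean_le_arith_mean_weighted _ _ _
            (fun i _ => by positivity)
            (by rw [Finset.sum_const, Finset.card_univ, Fintype.card_fin, nsmul_eq_mul];
                field_simp)
            (fun i _ => (hai m i).le)
      _ ≤ ∑ i, (z / r + (m i : ℝ) * v i) := by
          refine Finset.sum_le_sum fun i _ => ?_
          have h1 : (1 : ℝ) / r ≤ 1 := by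
            rw [div_le_one hr0]; exact_mod_cast hr
          nlinarith [(hai m i).le, (hai m i)]
  have hprodpos : 0 < ∏ i, (z / r + (m i : ℝ) * v i) ^ ((1 : ℝ) / r) :=
    Finset.prod_pos fun i _ => Real.rpow_pos_of_pos (hai m i) _
  calc (z + ∑ i, (m i : ℝ) * v i) ^ (-σ)
      ≤ (∏ i, (z / r + (m i : ℝ) * v i) ^ ((1 : ℝ) / r)) ^ (-σ) :=
        Real.rpow_le_rpow_of_nonpos hprodpos hamgm (neg_nonpos.mpr hσ0.le)
    _ = ∏ i, (z / r + (m i : ℝ) * v i) ^ (-(σ / r)) := by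
        have hpn : 0 ≤ ∏ i, (z / r + (m i : ℝ) * v i) :=
          Finset.prod_nonneg fun i _ => (hai m i).le
        rw [Real.finset_prod_rpow _ _ (fun i _ => (hai m i).le),
          ← Real.rpow_mul hpn, ← Real.finset_prod_rpow _ _ (fun i _ => (hai m i).le)]
        congr 1
        field_simp
end

section
/- Let l, r ≥ 1 be integers, A = (a_{ij}) an l×r matrix of positive real numbers, x = (x_1, …, x_r) ∈ ℝ_{>0}^r, and χ = (χ_1, …, χ_r) ∈ ℂ^r with |χ_j| ≤ 1 for all j. Then for every s ∈ ℂ with Re(s) > r/l, Shintani's multiple zeta series converges absolutely; i.e., the family ((∏_{j=1}^r χ_j^{m_j}) · ∏_{i=1}^l (∑_{j=1}^r a_{ij}(m_j + x_j))^{−s})_{m ∈ (ℤ_{≥0})^r} is summable in norm. -/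
/-- Summability of products over `Fin r → ℕ` of a summable nonnegative function. -/
lemma summable_pi_prod_aux {f : ℕ → ℝ} (hf0 : ∀ n, 0 ≤ f n) (hf : Summable f) :
    ∀ r : ℕ, Summable (fun m : Fin r → ℕ => ∏ j, f (m j)) := by
  intro r
  induction r with
  | zero => simpa using summable_of_finite_support (Set.toFinite _)
  | succ n ih =>
    have h1 : (0 : (Fin n → ℕ) → ℝ) ≤ fun m => ∏ j, f (m j) :=
      fun m => Finset.prod_nonneg fun j _ => hf0 _
    have h : Summable (fun p : ℕ × (Fin n → ℕ) => f p.1 * ∏ j, f (p.2 j)) :=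
      Summable.mul_of_nonneg (g := fun m : Fin n → ℕ => ∏ j, f (m j)) hf ih
        (fun k => hf0 k) h1
    have h2 := h.comp_injective (Fin.consEquiv (fun _ : Fin (n+1) => ℕ)).symm.injective
    refine h2.congr fun m => ?_
    simp [Fin.prod_univ_succ, Fin.consEquiv, Function.comp, Fin.tail]

/-- Shintani's multiple zeta series
`ζ(s, A, x, χ) = ∑_{m ∈ ℤ_{≥0}^r} (∏_j χ_j^{m_j}) ∏_{i=1}^l (∑_j a_{ij}(m_j+x_j))^{-s}`
(with `w^{-s} := exp(-s log w)`) converges absolutely for `Re s > r/l`. -/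
theorem shintani_zeta_summable (l r : ℕ) (hl : 1 ≤ l) (hr : 1 ≤ r)
    (A : Fin l → Fin r → ℝ) (hA : ∀ i j, 0 < A i j)
    (x : Fin r → ℝ) (hx : ∀ j, 0 < x j)
    (χ : Fin r → ℂ) (hχ : ∀ j, ‖χ j‖ ≤ 1)
    (s : ℂ) (hs : (r : ℝ) / (l : ℝ) < s.re) :
    Summable (fun m : Fin r → ℕ =>
      ‖(∏ j, χ j ^ m j) *
        ∏ i, Complex.exp (-s * (Real.log (∑ j, A i j * ((m j : ℝ) + x j)) : ℂ))‖) := by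
  haveI : Nonempty (Fin r) := Fin.pos_iff_nonempty.mp hr
  haveI : Nonempty (Fin l) := Fin.pos_iff_nonempty.mp hl
  have hl0 : (0:ℝ) < l := by exact_mod_cast hl
  have hr0 : (0:ℝ) < r := by exact_mod_cast hr
  set σ := s.re with hσdef
  have hσ : 0 < σ := lt_trans (by positivity) hs
  set p : ℝ := l * σ / r with hpdef
  have hp : 1 < p := by
    rw [hpdef, lt_div_iff₀ hr0]
    have := (div_lt_iff₀ hl0).mp hs
    nlinarith
  -- the comparison function
  set f : ℕ → ℝ := fun n => ((n:ℝ) + 1) ^ (-p) with hfdef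
  have hf0 : ∀ n, 0 ≤ f n := fun n => Real.rpow_nonneg (by positivity) _
  have hf : Summable f := by
    have h1 : Summable (fun n : ℕ => (n:ℝ) ^ (-p)) :=
      Real.summable_nat_rpow.2 (by linarith)
    have h2 := h1.comp_injective Nat.succ_injective
    refine h2.congr fun n => ?_
    simp only [hfdef, Function.comp, Nat.succ_eq_add_one]
    push_cast
    ring_nf
  -- constants
  set c : ℝ := Finset.univ.inf' Finset.univ_nonempty (fun j => min (x j) 1) with hcdef
  have hc0 : 0 < c := by
    rw [hcdef, Finset.lt_inf'_iff]
    exact fun j _ => lt_min (hx j) one_pos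
  have hcle : ∀ j, c ≤ min (x j) 1 := fun j =>
    Finset.inf'_le _ (Finset.mem_univ j)
  set a : Fin l → ℝ := fun i => Finset.univ.inf' Finset.univ_nonempty (A i) with hadef
  have ha0 : ∀ i, 0 < a i := fun i => by
    rw [hadef, Finset.lt_inf'_iff]
    exact fun j _ => hA i j
  have hale : ∀ i j, a i ≤ A i j := fun i j =>
    Finset.inf'_le _ (Finset.mem_univ j)
  set b : Fin l → ℝ := fun i => a i * c with hbdef
  have hb0 : ∀ i, 0 < b i := fun i => mul_pos (ha0 i) hc0
  set K : ℝ := ∏ i, (b i) ^ (-σ) with hKdef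
  -- pointwise bound
  have key : ∀ m : Fin r → ℕ,
      ‖(∏ j, χ j ^ m j) *
        ∏ i, Complex.exp (-s * (Real.log (∑ j, A i j * ((m j : ℝ) + x j)) : ℂ))‖
        ≤ K * ∏ j, f (m j) := by
    intro m
    set P : ℝ := ∏ j, ((m j : ℝ) + 1) with hPdef
    have hP0 : 0 < P := Finset.prod_pos fun j _ => by positivity
    set S : ℝ := ∑ j, ((m j : ℝ) + 1) with hSdef
    have hS0 : 0 < S := Finset.sum_pos (fun j _ => by positivity) Finset.univ_nonempty
    -- P ^ (1/r) ≤ S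
    have hPS : P ^ ((r:ℝ)⁻¹) ≤ S := by
      have h1 : P ≤ S ^ (r:ℕ) := by
        calc P ≤ ∏ _j : Fin r, S := by
              refine Finset.prod_le_prod (fun j _ => by positivity) (fun j _ => ?_)
              exact Finset.single_le_sum (f := fun j => ((m j : ℝ) + 1))
                (fun j _ => by positivity) (Finset.mem_univ j)
          _ = S ^ (r:ℕ) := by rw [Finset.prod_const, Finset.card_univ, Fintype.card_fin]
      have h2 : P ^ ((r:ℝ)⁻¹) ≤ (S ^ (r:ℕ)) ^ ((r:ℝ)⁻¹) :=
        Real.rpow_le_rpow hP0.le h1 (by positivity)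
      rwa [← Real.rpow_natCast S r, ← Real.rpow_mul hS0.le,
        mul_inv_cancel₀ (by positivity : (r:ℝ) ≠ 0), Real.rpow_one] at h2
    -- lower bound for each linear form
    have hw : ∀ i, b i * P ^ ((r:ℝ)⁻¹) ≤ ∑ j, A i j * ((m j : ℝ) + x j) := by
      intro i
      have h1 : b i * S ≤ ∑ j, A i j * ((m j : ℝ) + x j) := by
        rw [hSdef, Finset.mul_sum]
        refine Finset.sum_le_sum fun j _ => ?_
        have h2 : c ≤ x j := le_trans (hcle j) (min_le_left _ _)
        have h3 : c ≤ 1 := le_trans (hcle j) (min_le_right _ _)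
        have h4 : (0:ℝ) ≤ (m j : ℝ) := Nat.cast_nonneg _
        have h5 : c * ((m j : ℝ) + 1) ≤ (m j : ℝ) + x j := by nlinarith
        have h6 : a i * (c * ((m j : ℝ) + 1)) ≤ A i j * ((m j : ℝ) + x j) :=
          mul_le_mul (hale i j) h5 (by positivity) (hA i j).le
        calc b i * ((m j : ℝ) + 1) = a i * (c * ((m j : ℝ) + 1)) := by
              rw [hbdef]; ring
          _ ≤ A i j * ((m j : ℝ) + x j) := h6
      calc b i * P ^ ((r:ℝ)⁻¹) ≤ b i * S :=
            mul_le_mul_of_nonneg_left hPS (hb0 i).le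
        _ ≤ ∑ j, A i j * ((m j : ℝ) + x j) := h1
    have hw0 : ∀ i, 0 < ∑ j, A i j * ((m j : ℝ) + x j) := fun i =>
      lt_of_lt_of_le (mul_pos (hb0 i) (Real.rpow_pos_of_pos hP0 _)) (hw i)
    -- norms
    rw [norm_mul]
    have hnorm1 : ‖∏ j, χ j ^ m j‖ ≤ 1 := by
      rw [norm_prod]
      refine Finset.prod_le_one (fun j _ => norm_nonneg _) (fun j _ => ?_)
      rw [norm_pow]
      exact pow_le_one₀ (norm_nonneg _) (hχ j)
    have hnorm2 : ‖∏ i, Complex.exp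
        (-s * (Real.log (∑ j, A i j * ((m j : ℝ) + x j)) : ℂ))‖
        ≤ K * ∏ j, f (m j) := by
      rw [norm_prod]
      have step1 : ∀ i, ‖Complex.exp
          (-s * (Real.log (∑ j, A i j * ((m j : ℝ) + x j)) : ℂ))‖
          = (∑ j, A i j * ((m j : ℝ) + x j)) ^ (-σ) := by
        intro i
        rw [Complex.norm_exp,
          Real.rpow_def_of_pos (hw0 i)]
        congr 1
        simp [Complex.mul_re]
        ring
      calc (∏ i, ‖Complex.exp
            (-s * (Real.log (∑ j, A i j * ((m j : ℝ) + x j)) : ℂ))‖)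
          = ∏ i, (∑ j, A i j * ((m j : ℝ) + x j)) ^ (-σ) :=
            Finset.prod_congr rfl fun i _ => step1 i
        _ ≤ ∏ i, (b i * P ^ ((r:ℝ)⁻¹)) ^ (-σ) := by
            refine Finset.prod_le_prod (fun i _ => Real.rpow_nonneg (hw0 i).le _)
              (fun i _ => ?_)
            exact Real.rpow_le_rpow_of_nonpos
              (mul_pos (hb0 i) (Real.rpow_pos_of_pos hP0 _)) (hw i)
              (neg_nonpos.mpr hσ.le)
        _ = ∏ i, ((b i) ^ (-σ) * P ^ ((r:ℝ)⁻¹ * (-σ))) := by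
            refine Finset.prod_congr rfl fun i _ => ?_
            rw [Real.mul_rpow (hb0 i).le (Real.rpow_nonneg hP0.le _),
              ← Real.rpow_mul hP0.le]
        _ = K * (P ^ ((r:ℝ)⁻¹ * (-σ))) ^ (l:ℕ) := by
            rw [Finset.prod_mul_distrib, Finset.prod_const, Finset.card_univ,
              Fintype.card_fin]
        _ = K * P ^ (-p) := by
            have hexp : (r:ℝ)⁻¹ * (-σ) * (l:ℝ) = -p := by
              rw [hpdef, div_eq_mul_inv]; ring
            rw [← Real.rpow_natCast (P ^ ((r:ℝ)⁻¹ * (-σ))) l,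
              ← Real.rpow_mul hP0.le, hexp]
        _ = K * ∏ j, f (m j) := by
            congr 1
            rw [hPdef, hfdef, ← Real.finset_prod_rpow _ _ (fun j _ => by positivity)]
    calc ‖∏ j, χ j ^ m j‖ * ‖∏ i, Complex.exp
          (-s * (Real.log (∑ j, A i j * ((m j : ℝ) + x j)) : ℂ))‖
        ≤ 1 * (K * ∏ j, f (m j)) :=
          mul_le_mul hnorm1 hnorm2 (norm_nonneg _) one_pos.le
      _ = K * ∏ j, f (m j) := one_mul _
  exact Summable.of_nonneg_of_le (fun m => norm_nonneg _) key
    ((summable_pi_prod_aux hf0 hf r).mul_left K)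
end

section
/- Let I be a countable index set, z : I → ℝ_{>0}, and r₀ ∈ ℝ such that the family ((z_i)^{−s})_{i ∈ I} is absolutely summable for every s ∈ ℂ with Re(s) > r₀. Let α ∈ ℝ_{>0}. Let U ⊆ ℂ be a connected open set containing 0 and the half-plane {s : Re(s) > r₀}, and let f, g be analytic on U with f(s) = ∑_{i ∈ I} (z_i)^{−s} and g(s) = ∑_{i ∈ I} (α z_i)^{−s} for all s with Re(s) > r₀. Then f′(0) − g′(0) = f(0) · log α. (This is the identity LΓ(R) − LΓ(αR) = ζ(0, R) · log α for the log multiple gamma function attached to a countable set R of positive reals whose zeta series continues analytically to 0.) -/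
/-- The identity `LΓ(R) - LΓ(αR) = ζ(0, R) · log α`: if `f`, `g` are analytic
continuations (to a connected open set `U` containing `0` and the half-plane `Re s > r₀`) of
`∑_i z_i^{-s}` and `∑_i (α z_i)^{-s}` respectively, then `f'(0) - g'(0) = f(0) log α`. -/
theorem logGamma_scaling (I : Type*) [Countable I] (z : I → ℝ) (hz : ∀ i, 0 < z i) (r₀ : ℝ)
    (hsum : ∀ s : ℂ, r₀ < s.re →
      Summable (fun i => ‖Complex.exp (-s * (Real.log (z i) : ℂ))‖))
    (α : ℝ) (hα : 0 < α)
    (U : Set ℂ) (hUopen : IsOpen U) (hUconn : IsConnected U)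
    (hU0 : (0 : ℂ) ∈ U) (hUhp : {s : ℂ | r₀ < s.re} ⊆ U)
    (f g : ℂ → ℂ) (hf : AnalyticOnNhd ℂ f U) (hg : AnalyticOnNhd ℂ g U)
    (hfs : ∀ s : ℂ, r₀ < s.re → f s = ∑' i, Complex.exp (-s * (Real.log (z i) : ℂ)))
    (hgs : ∀ s : ℂ, r₀ < s.re → g s = ∑' i, Complex.exp (-s * (Real.log (α * z i) : ℂ))) :
    deriv f 0 - deriv g 0 = f 0 * (Real.log α : ℂ) := by
  set c : ℂ := (Real.log α : ℂ) with hc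
  set h : ℂ → ℂ := fun s => Complex.exp (-s * c) * f s with hh
  have hexp : AnalyticOnNhd ℂ (fun s : ℂ => Complex.exp (-s * c)) U := by
    intro x _
    exact (((analyticAt_id).neg.mul analyticAt_const).cexp)
  have hhU : AnalyticOnNhd ℂ h U := fun x hx => (hexp x hx).mul (hf x hx)
  -- g = h on the half-plane
  have hgh : ∀ s : ℂ, r₀ < s.re → g s = h s := by
    intro s hs
    rw [hgs s hs, hh]
    simp only
    rw [hfs s hs, ← tsum_mul_left]
    congr 1
    funext i
    rw [Real.log_mul (ne_of_gt hα) (ne_of_gt (hz i))]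
    push_cast
    rw [mul_add, Complex.exp_add]
  -- pick a point in the half-plane
  obtain ⟨s₀, hs₀⟩ : ∃ s₀ : ℂ, r₀ < s₀.re := ⟨(r₀ + 1 : ℝ), by simp⟩
  have hs₀U : s₀ ∈ U := hUhp hs₀
  have heq : Set.EqOn g h U := by
    apply hg.eqOn_of_preconnected_of_eventuallyEq hhU hUconn.isPreconnected
      hs₀U
    have hopen : IsOpen {s : ℂ | r₀ < s.re} := isOpen_lt continuous_const Complex.continuous_re
    filter_upwards [hopen.mem_nhds hs₀] with s hs using hgh s hs
  have hderiv : deriv g 0 = deriv h 0 := by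
    apply Filter.EventuallyEq.deriv_eq
    filter_upwards [hUopen.mem_nhds hU0] with s hs using heq hs
  have hdf : DifferentiableAt ℂ f 0 := (hf 0 hU0).differentiableAt
  have hde : DifferentiableAt ℂ (fun s : ℂ => Complex.exp (-s * c)) 0 :=
    (hexp 0 hU0).differentiableAt
  have hdexp : deriv (fun s : ℂ => Complex.exp (-s * c)) 0 = -c := by
    have : ∀ s : ℂ, HasDerivAt (fun s : ℂ => Complex.exp (-s * c)) (-c * Complex.exp (-s * c)) s := by
      intro s
      have h1 : HasDerivAt (fun s : ℂ => -s * c) (-c) s := by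
        simpa using ((hasDerivAt_id s).neg.mul_const c)
      simpa [mul_comm, Function.comp_def] using (Complex.hasDerivAt_exp (-s * c)).comp s h1
    rw [(this 0).deriv]
    simp
  have hdh : deriv h 0 = -c * f 0 + deriv f 0 := by
    rw [hh, deriv_fun_mul hde hdf, hdexp]
    simp
  have hg0 : g 0 = h 0 := heq hU0
  rw [hderiv, hdh]
  ring
end
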